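/- Let g > 0, h_L > 0, h_R > 0 and q_L, q_R ∈ ℝ, and define f(h) = f_L(h) + f_R(h) + q_R − q_L on (0, ∞), where for h_K > 0, f_K(h) = (2/3)√g (h^{3/2} − h_K^{3/2}) if h ≤ h_K and f_K(h) = √((1/2) g (h + h_K))(h − h_K) if h > h_K. Then f is continuous and strictly increasing on (0, ∞); moreover, if q_R − q_L < (2/3)√g (h_L^{3/2} + h_R^{3/2}), then f has exactly one zero h_* ∈ (0, ∞). -/

import Mathlib

private lemma rpow32_cont : Continuous fun h : ℝ => h ^ ((3:ℝ)/2) := by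
  rw [continuous_iff_continuousAt]
  intro x
  exact Real.continuousAt_rpow_const x _ (Or.inr (by norm_num))

private lemma fK_cont (g hK : ℝ) :
    Continuous (fun h : ℝ => if h ≤ hK then
        (2/3) * Real.sqrt g * (h ^ ((3:ℝ)/2) - hK ^ ((3:ℝ)/2))
      else Real.sqrt ((1/2) * g * (h + hK)) * (h - hK)) := by
  apply Continuous.if_le
  · exact continuous_const.mul (rpow32_cont.sub continuous_const)
  · exact ((continuous_const.mul (continuous_id.add continuous_const)).sqrt).mul
      (continuous_id.sub continuous_const)
  · exact continuous_id
  · exact continuous_const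
  · intro x hx
    subst hx
    simp

private lemma fK_mono (g hK : ℝ) (hg : 0 < g) (hhK : 0 < hK) :
    StrictMonoOn (fun h : ℝ => if h ≤ hK then
        (2/3) * Real.sqrt g * (h ^ ((3:ℝ)/2) - hK ^ ((3:ℝ)/2))
      else Real.sqrt ((1/2) * g * (h + hK)) * (h - hK)) (Set.Ioi 0) := by
  intro x hx y hy hxy
  simp only [Set.mem_Ioi] at hx hy
  by_cases hyK : y ≤ hK
  · have hxK : x ≤ hK := (hxy.trans_le hyK).le
    simp only [if_pos hxK, if_pos hyK]
    have h1 : x ^ ((3:ℝ)/2) < y ^ ((3:ℝ)/2) :=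
      Real.rpow_lt_rpow hx.le hxy (by norm_num)
    have hs : 0 < (2/3) * Real.sqrt g := by positivity
    nlinarith
  · push_neg at hyK
    have hfy : 0 < Real.sqrt ((1/2) * g * (y + hK)) * (y - hK) := by
      apply mul_pos
      · exact Real.sqrt_pos.mpr (by nlinarith)
      · linarith
    simp only [if_neg (not_le.mpr hyK)]
    by_cases hxK : x ≤ hK
    · simp only [if_pos hxK]
      have h1 : x ^ ((3:ℝ)/2) ≤ hK ^ ((3:ℝ)/2) :=
        Real.rpow_le_rpow hx.le hxK (by norm_num)
      have hs : (0:ℝ) ≤ (2/3) * Real.sqrt g := by positivity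
      nlinarith
    · push_neg at hxK
      simp only [if_neg (not_le.mpr hxK)]
      apply mul_lt_mul'
      · apply Real.sqrt_le_sqrt; nlinarith
      · linarith
      · linarith
      · exact Real.sqrt_pos.mpr (by nlinarith)

/-- The function `f(h) = f_L(h) + f_R(h) + q_R − q_L` of the exact Riemann
solver for the pressure system is continuous and strictly increasing on
`(0, ∞)`, and under the depth-positivity condition
`q_R − q_L < (2/3)√g (h_L^{3/2} + h_R^{3/2})` it has exactly one zero. -/
theorem depth_equation_unique_root
    (g hL hR qL qR : ℝ) (hg : 0 < g) (hhL : 0 < hL) (hhR : 0 < hR) :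
    let fK : ℝ → ℝ → ℝ := fun hK h =>
      if h ≤ hK then (2/3) * Real.sqrt g * (h ^ ((3:ℝ)/2) - hK ^ ((3:ℝ)/2))
      else Real.sqrt ((1/2) * g * (h + hK)) * (h - hK)
    let f : ℝ → ℝ := fun h => fK hL h + fK hR h + qR - qL
    ContinuousOn f (Set.Ioi 0) ∧
    StrictMonoOn f (Set.Ioi 0) ∧
    (qR - qL < (2/3) * Real.sqrt g * (hL ^ ((3:ℝ)/2) + hR ^ ((3:ℝ)/2)) →
      ∃! h : ℝ, h ∈ Set.Ioi (0:ℝ) ∧ f h = 0) := by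
  intro fK f
  have hcont : Continuous f :=
    (((fK_cont g hL).add (fK_cont g hR)).add continuous_const).sub continuous_const
  have hmono : StrictMonoOn f (Set.Ioi 0) := by
    intro x hx y hy hxy
    have h1 := fK_mono g hL hg hhL hx hy hxy
    have h2 := fK_mono g hR hg hhR hx hy hxy
    simp only [f, fK]
    simp only at h1 h2
    linarith
  refine ⟨hcont.continuousOn, hmono, ?_⟩
  intro hcond
  -- value at 0 is negative
  have hf0 : f 0 < 0 := by
    have e : f 0 = qR - qL - (2/3) * Real.sqrt g * (hL ^ ((3:ℝ)/2) + hR ^ ((3:ℝ)/2)) := by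
      simp only [f, fK, if_pos hhL.le, if_pos hhR.le,
        Real.zero_rpow (by norm_num : ((3:ℝ)/2) ≠ 0)]
      ring
    rw [e]; linarith
  -- choose a large point where f is positive
  have hsg : 0 < Real.sqrt (g/2) := Real.sqrt_pos.mpr (by linarith)
  set t : ℝ := max 1 ((qL - qR) / (2 * Real.sqrt (g/2)) + 1) with ht
  have ht1 : (1:ℝ) ≤ t := le_max_left _ _
  have ht2 : (qL - qR) / (2 * Real.sqrt (g/2)) + 1 ≤ t := le_max_right _ _
  set b : ℝ := max hL hR + t with hb
  have hbL : hL + t ≤ b := by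
    have := le_max_left hL hR; simp only [hb]; linarith
  have hbR : hR + t ≤ b := by
    have := le_max_right hL hR; simp only [hb]; linarith
  have key : ∀ hK : ℝ, 0 < hK → hK + t ≤ b →
      Real.sqrt (g/2) * t ≤ Real.sqrt ((1/2) * g * (b + hK)) * (b - hK) := by
    intro hK hhK hKb
    have h1 : Real.sqrt (g/2) ≤ Real.sqrt ((1/2) * g * (b + hK)) := by
      apply Real.sqrt_le_sqrt
      nlinarith
    exact mul_le_mul h1 (by linarith) (by linarith) (Real.sqrt_nonneg _)
  have hfb : 0 < f b := by
    have hbLlt : hL < b := by linarith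
    have hbRlt : hR < b := by linarith
    have e : f b = Real.sqrt ((1/2) * g * (b + hL)) * (b - hL)
        + Real.sqrt ((1/2) * g * (b + hR)) * (b - hR) + qR - qL := by
      simp only [f, fK, if_neg (not_le.mpr hbLlt), if_neg (not_le.mpr hbRlt)]
    have k1 := key hL hhL hbL
    have k2 := key hR hhR hbR
    have hcancel : 2 * Real.sqrt (g/2) * ((qL - qR) / (2 * Real.sqrt (g/2)) + 1)
        = (qL - qR) + 2 * Real.sqrt (g/2) := by
      field_simp
    have hbig : qL - qR < 2 * Real.sqrt (g/2) * t := by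
      have : 2 * Real.sqrt (g/2) * ((qL - qR) / (2 * Real.sqrt (g/2)) + 1)
          ≤ 2 * Real.sqrt (g/2) * t := by
        apply mul_le_mul_of_nonneg_left ht2 (by positivity)
      rw [hcancel] at this
      linarith
    rw [e]
    nlinarith
  have hb0 : (0:ℝ) ≤ b := by nlinarith
  have hiv := intermediate_value_Ioo hb0 hcont.continuousOn
  obtain ⟨c, hcmem, hfc⟩ := hiv ⟨hf0, hfb⟩
  refine ⟨c, ⟨hcmem.1, hfc⟩, ?_⟩
  rintro y ⟨hy, hfy⟩
  exact hmono.injOn hy hcmem.1 (hfy.trans hfc.symm)
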